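/- Let D ≥ 2 be an integer and let G = (V,E) be an infinite, connected, locally finite simple graph in which every vertex has degree at most D. Let p ∈ [0,1] satisfy 1 − p ≤ (D−1)^{D−1}/D^D. Then for every finite W ⊆ V one has Ξ_{G[W]}(p·1) ≥ ((D−1)/D)^{|W|} > 0; in particular the homogeneous vector with all coordinates equal to p lies in the interior Shearer set of G (so the critical homogeneous Shearer parameter of G is at most 1 − (D−1)^{D−1}/D^D). -/

import Mathlib

open MeasureTheory Finset
open scoped Classical

/-- The critical function Ξ_{G[W]}(p). -/
noncomputable def Xi {V : Type*} (G : SimpleGraph V) (W : Finset V) (p : V → ℝ) : ℝ :=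
  ∑ T ∈ W.powerset,
    if ∀ u ∈ T, ∀ w ∈ T, ¬ G.Adj u w then ∏ v ∈ T, -(1 - p v) else 0

lemma Xi_empty {V : Type*} (G : SimpleGraph V) (p : V → ℝ) : Xi G ∅ p = 1 := by
  simp [Xi]

/-- Fundamental identity: deleting a vertex. -/
lemma Xi_erase {V : Type*} (G : SimpleGraph V) (p : V → ℝ) (S : Finset V) (u : V)
    (hu : u ∈ S) :
    Xi G S p = Xi G (S.erase u) p
      - (1 - p u) * Xi G ((S.erase u).filter (fun w => ¬ G.Adj u w)) p := by
  classical
  set g : Finset V → ℝ :=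
    fun T => if ∀ a ∈ T, ∀ b ∈ T, ¬ G.Adj a b then ∏ v ∈ T, -(1 - p v) else 0 with hg
  have hS : S = insert u (S.erase u) := (Finset.insert_erase hu).symm
  have hnot : u ∉ S.erase u := Finset.notMem_erase u S
  have h1 : Xi G S p = Xi G (S.erase u) p + ∑ T ∈ (S.erase u).powerset, g (insert u T) := by
    rw [Xi]
    conv_lhs => rw [hS]
    rw [Finset.sum_powerset_insert hnot]
    rfl
  rw [h1]
  have key : ∑ T ∈ (S.erase u).powerset, g (insert u T)
      = - (1 - p u) * Xi G ((S.erase u).filter (fun w => ¬ G.Adj u w)) p := by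
    set F := (S.erase u).filter (fun w => ¬ G.Adj u w) with hF
    have step1 : ∀ T ∈ (S.erase u).powerset,
        g (insert u T) = if T ∈ F.powerset then (-(1 - p u)) * g T else 0 := by
      intro T hT
      rw [Finset.mem_powerset] at hT
      have huT : u ∉ T := fun h => hnot (hT h)
      by_cases hsub : T ∈ F.powerset
      · rw [if_pos hsub]
        rw [Finset.mem_powerset] at hsub
        have havoid : ∀ w ∈ T, ¬ G.Adj u w := fun w hw => (Finset.mem_filter.1 (hsub hw)).2
        by_cases hind : ∀ a ∈ T, ∀ b ∈ T, ¬ G.Adj a b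
        · have hind' : ∀ a ∈ insert u T, ∀ b ∈ insert u T, ¬ G.Adj a b := by
            intro a ha b hb
            rcases Finset.mem_insert.1 ha with ha' | ha'
            · rcases Finset.mem_insert.1 hb with hb' | hb'
              · subst ha'; subst hb'; exact G.loopless.irrefl _
              · subst ha'; exact havoid b hb'
            · rcases Finset.mem_insert.1 hb with hb' | hb'
              · subst hb'; exact fun h => havoid a ha' (G.adj_symm h)
              · exact hind a ha' b hb'
          simp only [hg, if_pos hind, if_pos hind', Finset.prod_insert huT]
        · have hind' : ¬ ∀ a ∈ insert u T, ∀ b ∈ insert u T, ¬ G.Adj a b := by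
            intro h
            exact hind fun a ha b hb =>
              h a (Finset.mem_insert_of_mem ha) b (Finset.mem_insert_of_mem hb)
          simp only [hg, if_neg hind, if_neg hind', mul_zero]
      · rw [if_neg hsub]
        have : ∃ w ∈ T, G.Adj u w := by
          by_contra hcon
          push_neg at hcon
          exact hsub (Finset.mem_powerset.2 fun w hw =>
            Finset.mem_filter.2 ⟨hT hw, hcon w hw⟩)
        obtain ⟨w, hwT, hadj⟩ := this
        have hind' : ¬ ∀ a ∈ insert u T, ∀ b ∈ insert u T, ¬ G.Adj a b := by
          intro h
          exact h u (Finset.mem_insert_self u T) w (Finset.mem_insert_of_mem hwT) hadj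
        simp only [hg, if_neg hind']
    rw [Finset.sum_congr rfl step1, Finset.sum_ite_mem]
    have hinter : (S.erase u).powerset ∩ F.powerset = F.powerset := by
      apply Finset.inter_eq_right.2
      exact Finset.powerset_mono.2 (Finset.filter_subset _ _)
    rw [hinter, ← Finset.mul_sum]
    rfl
  rw [key]
  ring

/-- Along any walk from inside S to outside S there is a boundary edge. -/
lemma exists_boundary_walk {V : Type*} (G : SimpleGraph V) (S : Finset V) :
    ∀ {s t : V}, G.Walk s t → s ∈ S → t ∉ S → ∃ u ∈ S, ∃ x, G.Adj u x ∧ x ∉ S := by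
  intro s t w
  induction w with
  | nil => intro hs ht; exact absurd hs ht
  | @cons a b c h pw ih =>
      intro hs ht
      by_cases hb : b ∈ S
      · exact ih hb ht
      · exact ⟨a, hs, b, h, hb⟩

lemma exists_boundary {V : Type*} [Infinite V] (G : SimpleGraph V) (hconn : G.Connected)
    (S : Finset V) (hS : S.Nonempty) : ∃ u ∈ S, ∃ x, G.Adj u x ∧ x ∉ S := by
  obtain ⟨s, hs⟩ := hS
  obtain ⟨t, ht⟩ := Infinite.exists_notMem_finset S
  obtain ⟨w⟩ := hconn s t
  exact exists_boundary_walk G S w hs ht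

/-- uniform degree bound D and q ≤ (D-1)^(D-1)/D^D imply Shearer
interior, with explicit lower bound ((D-1)/D)^|W| on the critical functions. -/
theorem stmt5 {V : Type*} [Infinite V] (G : SimpleGraph V) (hconn : G.Connected)
    (hlf : ∀ v : V, (G.neighborSet v).Finite)
    (D : ℕ) (hD : 2 ≤ D) (hdeg : ∀ v : V, (hlf v).toFinset.card ≤ D)
    (p : ℝ) (hp : p ∈ Set.Icc (0:ℝ) 1)
    (hq : 1 - p ≤ ((D : ℝ) - 1) ^ (D - 1) / (D : ℝ) ^ D) :
    ∀ W : Finset V,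
      (((D : ℝ) - 1) / D) ^ W.card ≤ Xi G W (fun _ => p) ∧
      0 < Xi G W (fun _ => p) := by
  classical
  set r : ℝ := ((D : ℝ) - 1) / D with hr
  have hD0 : (0:ℝ) < D := by positivity
  have hD1 : (1:ℝ) ≤ (D:ℝ) - 1 := by
    have : (2:ℝ) ≤ D := by exact_mod_cast hD
    linarith
  have hr0 : 0 < r := by
    apply div_pos <;> linarith
  have hr1 : r ≤ 1 := by
    rw [div_le_one hD0]; linarith
  have hq0 : 0 ≤ 1 - p := by linarith [hp.2]
  -- q ≤ (1/D) * r^(D-1)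
  have hqr : 1 - p ≤ (1 / D) * r ^ (D - 1) := by
    have : (1 / (D:ℝ)) * r ^ (D - 1) = ((D : ℝ) - 1) ^ (D - 1) / (D : ℝ) ^ D := by
      rw [hr, div_pow]
      have hDsucc : (D:ℝ) ^ D = (D:ℝ) ^ (D - 1) * D := by
        rw [← pow_succ]
        congr 1
        omega
      rw [hDsucc]
      field_simp
    rw [this]; exact hq
  -- the main strong induction
  have key : ∀ n : ℕ, ∀ S : Finset V, S.card = n →
      (r ^ n ≤ Xi G S (fun _ => p) ∧
        ∀ u ∈ S, (∃ x, G.Adj u x ∧ x ∉ S) →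
          r * Xi G (S.erase u) (fun _ => p) ≤ Xi G S (fun _ => p)) := by
    intro n
    induction n using Nat.strong_induction_on with
    | _ n ih =>
      intro S hScard
      -- Part 2 first (uses only smaller cardinalities)
      have part2 : ∀ u ∈ S, (∃ x, G.Adj u x ∧ x ∉ S) →
          r * Xi G (S.erase u) (fun _ => p) ≤ Xi G S (fun _ => p) := by
        intro u huS ⟨x, hadjx, hxS⟩
        set A := S.erase u with hA
        have huA : u ∉ A := Finset.notMem_erase u S
        have hAcard : A.card = n - 1 := by rw [hA, Finset.card_erase_of_mem huS, hScard]
        have hn1 : 1 ≤ n := by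
          rw [← hScard]; exact Finset.card_pos.2 ⟨u, huS⟩
        have hAlt : A.card < n := by omega
        set F := A.filter (fun w => G.Adj u w) with hF
        -- F.card ≤ D - 1
        have hFcard : F.card ≤ D - 1 := by
          have hsub : F ⊆ (hlf u).toFinset.erase x := by
            intro f hf
            rw [Finset.mem_erase]
            have hadj : G.Adj u f := (Finset.mem_filter.1 hf).2
            constructor
            · rintro rfl
              exact hxS (Finset.mem_of_mem_erase (Finset.mem_filter.1 hf).1)
            · rw [Set.Finite.mem_toFinset]; exact hadj
          have hx : x ∈ (hlf u).toFinset := by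
            rw [Set.Finite.mem_toFinset]; exact hadjx
          calc F.card ≤ ((hlf u).toFinset.erase x).card := Finset.card_le_card hsub
            _ = (hlf u).toFinset.card - 1 := Finset.card_erase_of_mem hx
            _ ≤ D - 1 := by have := hdeg u; omega
        -- chain: deleting a set B of neighbors of u from A
        have chain : ∀ B : Finset V, B ⊆ A → (∀ b ∈ B, G.Adj u b) →
            r ^ B.card * Xi G (A \ B) (fun _ => p) ≤ Xi G A (fun _ => p) := by
          intro B
          induction B using Finset.induction_on with
          | empty => intro _ _; simp
          | @insert b B hbB ihB =>
              intro hsub hadj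
              have hbA : b ∈ A := hsub (Finset.mem_insert_self b B)
              have hBA : B ⊆ A := fun y hy => hsub (Finset.mem_insert_of_mem hy)
              have hbC : b ∈ A \ B := Finset.mem_sdiff.2 ⟨hbA, hbB⟩
              have hClt : (A \ B).card < n :=
                lt_of_le_of_lt (Finset.card_le_card (Finset.sdiff_subset)) hAlt
              have hihC := (ih (A \ B).card hClt (A \ B) rfl).2 b hbC
                ⟨u, G.adj_symm (hadj b (Finset.mem_insert_self b B)),
                  fun h => huA (Finset.mem_sdiff.1 h).1⟩
              have heq : A \ insert b B = (A \ B).erase b := Finset.sdiff_insert A B b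
              rw [Finset.card_insert_of_notMem hbB, heq, pow_succ]
              calc r ^ B.card * r * Xi G ((A \ B).erase b) (fun _ => p)
                  = r ^ B.card * (r * Xi G ((A \ B).erase b) (fun _ => p)) := by ring
                _ ≤ r ^ B.card * Xi G (A \ B) (fun _ => p) := by
                    apply mul_le_mul_of_nonneg_left hihC (by positivity)
                _ ≤ Xi G A (fun _ => p) := ihB hBA
                    (fun y hy => hadj y (Finset.mem_insert_of_mem hy))
          
        have hchain := chain F (Finset.filter_subset _ _)
          (fun b hb => (Finset.mem_filter.1 hb).2)
        -- rewrite using fundamental identity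
        have hfund := Xi_erase G (fun _ => p) S u huS
        have hfilter : A.filter (fun w => ¬ G.Adj u w) = A \ F := by
          rw [hF]; exact Finset.filter_not _ _
        rw [hfilter] at hfund
        -- positivity of Xi (A \ F)
        have hXFpos : 0 < Xi G (A \ F) (fun _ => p) := by
          have hlt : (A \ F).card < n :=
            lt_of_le_of_lt (Finset.card_le_card (Finset.sdiff_subset)) hAlt
          have := (ih (A \ F).card hlt (A \ F) rfl).1
          exact lt_of_lt_of_le (by positivity) this
        -- arithmetic conclusion
        set XA := Xi G A (fun _ => p) with hXA
        set XF := Xi G (A \ F) (fun _ => p) with hXF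
        rw [hfund]
        have h2 : r ^ (D - 1) ≤ r ^ F.card :=
          pow_le_pow_of_le_one (le_of_lt hr0) hr1 hFcard
        have h1 : (1 - p) * XF ≤ ((1 / D) * r ^ (D - 1)) * XF :=
          mul_le_mul_of_nonneg_right hqr (le_of_lt hXFpos)
        have h3 : ((1 / D) * r ^ (D - 1)) * XF ≤ ((1 / D) * r ^ F.card) * XF := by
          apply mul_le_mul_of_nonneg_right _ (le_of_lt hXFpos)
          apply mul_le_mul_of_nonneg_left h2 (by positivity)
        have h4 : ((1 / D) * r ^ F.card) * XF ≤ (1 / D) * XA := by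
          rw [mul_assoc]
          exact mul_le_mul_of_nonneg_left hchain (by positivity)
        have hrD : r = 1 - 1 / D := by
          rw [hr]; field_simp
        rw [hrD]
        nlinarith [h1, h3, h4]
      -- Part 1
      have part1 : r ^ n ≤ Xi G S (fun _ => p) := by
        rcases Nat.eq_zero_or_pos n with hn0 | hnpos
        · subst hn0
          have : S = ∅ := Finset.card_eq_zero.1 hScard
          rw [this, Xi_empty]; norm_num
        · have hSne : S.Nonempty := Finset.card_pos.1 (hScard ▸ hnpos)
          obtain ⟨u, huS, hx⟩ := exists_boundary G hconn S hSne
          have h2 := part2 u huS hx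
          have hcard : (S.erase u).card = n - 1 := by
            rw [Finset.card_erase_of_mem huS, hScard]
          have hlt : (S.erase u).card < n := by omega
          have h1 := (ih (S.erase u).card hlt (S.erase u) rfl).1
          rw [hcard] at h1
          calc r ^ n = r * r ^ (n - 1) := by
                rw [← pow_succ']
                congr 1
                omega
            _ ≤ r * Xi G (S.erase u) (fun _ => p) := by
                apply mul_le_mul_of_nonneg_left h1 (le_of_lt hr0)
            _ ≤ Xi G S (fun _ => p) := h2
      exact ⟨part1, part2⟩
  intro W
  have h := (key W.card W rfl).1
  refine ⟨h, lt_of_lt_of_le ?_ h⟩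
  positivity
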